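/- Let N ≥ 1, let θ_1,…,θ_N, φ_1,…,φ_N ∈ ℝ, let A = ⊗_{l=1}^N A(θ_l, φ_l), and suppose ψ = Σ_{i ∈ S_0} c_i |i⟩ satisfies Aψ = ψ. Define c'_i := (∏_{l=1}^N (i·e^{−iφ_l})^{i_l}) c_i, where i denotes the imaginary unit. Then for every bit string m ∈ {0,1}^N: sin(Σ_{l=1}^N (−1)^{m_l} θ_l) · Σ_{i ∈ S_0} (−1)^{m·i} c'_i = 0, where m·i = Σ_{l=1}^N m_l i_l. -/

import Mathlib

open Matrix Finset

/-- Tensor product of `N` 2×2 complex matrices, indexed by bit strings. -/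
noncomputable def tensorN {N : ℕ} (M : Fin N → Matrix (Fin 2) (Fin 2) ℂ) :
    Matrix (Fin N → Fin 2) (Fin N → Fin 2) ℂ :=
  fun i j => ∏ l, M l (i l) (j l)

/-- The spin observable `A(θ,φ)`. -/
noncomputable def spinA (θ φ : ℝ) : Matrix (Fin 2) (Fin 2) ℂ :=
  !![(Real.cos θ : ℂ), Complex.exp (-(φ : ℂ) * Complex.I) * (Real.sin θ : ℂ);
     Complex.exp ((φ : ℂ) * Complex.I) * (Real.sin θ : ℂ), -(Real.cos θ : ℂ)]

lemma site (θ φ : ℝ) (m b : Fin 2) :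
    ∑ a : Fin 2, ((-1 : ℂ)^(m:ℕ) * Complex.I * Complex.exp (-(φ:ℂ)*Complex.I))^(a:ℕ) * spinA θ φ a b
    = Complex.exp ((-1:ℂ)^(m:ℕ) * (θ:ℂ) * Complex.I) *
      ((-1:ℂ)^((m:ℕ)+1) * Complex.I * Complex.exp (-(φ:ℂ)*Complex.I))^(b:ℕ) := by
  have hE : Complex.exp (-((φ:ℂ)*Complex.I)) * Complex.exp ((φ:ℂ)*Complex.I) = 1 := by
    rw [← Complex.exp_add]; ring_nf; exact Complex.exp_zero
  have hdp : Complex.exp ((θ:ℂ)*Complex.I) = Complex.cos θ + Complex.sin θ * Complex.I :=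
    (Complex.exp_mul_I _)
  have hdm : Complex.exp (-((θ:ℂ)*Complex.I)) = Complex.cos θ - Complex.sin θ * Complex.I := by
    rw [show -((θ:ℂ)*Complex.I) = (-(θ:ℂ))*Complex.I by ring, Complex.exp_mul_I]
    simp [Complex.cos_neg, Complex.sin_neg]; ring
  have hI : Complex.I ^ 2 = -1 := Complex.I_sq
  fin_cases m <;> fin_cases b <;> simp [spinA, Fin.sum_univ_two]
  · linear_combination (Complex.I * Complex.sin θ) * hE - hdp
  · linear_combination (Complex.I * Complex.exp (-((φ:ℂ)*Complex.I))) * hdp +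
      (Complex.exp (-((φ:ℂ)*Complex.I)) * Complex.sin θ) * hI
  · linear_combination (-(Complex.I * Complex.sin θ)) * hE - hdm
  · linear_combination (-(Complex.I * Complex.exp (-((φ:ℂ)*Complex.I)))) * hdm +
      (Complex.exp (-((φ:ℂ)*Complex.I)) * Complex.sin θ) * hI

lemma hflip (a : Fin 2) : ((-1:ℂ))^((a:ℕ)+1) = (-1:ℂ)^(((a+1:Fin 2)):ℕ) := by
  fin_cases a <;> norm_num [show ((2:Fin 2):ℕ) = 0 from rfl] <;> rfl

lemma hneg (a : Fin 2) : ((-1:ℂ))^(((a+1:Fin 2)):ℕ) = -((-1:ℂ))^((a:ℕ)) := by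
  fin_cases a <;> norm_num [show ((2:Fin 2):ℕ) = 0 from rfl] <;> rfl

lemma aux_pair {α : Type*} [Fintype α] [DecidableEq α] (S : Finset α) (u c : α → ℂ) :
    ∑ j, u j * (∑ i ∈ S, c i • (Pi.single i 1 : α → ℂ)) j = ∑ i ∈ S, u i * c i := by
  simp only [Finset.sum_apply, Pi.smul_apply, smul_eq_mul, Pi.single_apply, Finset.mul_sum,
    mul_ite, mul_one, mul_zero]
  rw [Finset.sum_comm]
  refine Finset.sum_congr rfl fun i hi => ?_
  simp [Finset.sum_ite_eq']

lemma aux_inner {N : ℕ} (θ φ : Fin N → ℝ) (m i : Fin N → Fin 2) :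
    ∑ j : Fin N → Fin 2,
      (∏ l, ((-1:ℂ)^(m l:ℕ) * Complex.I * Complex.exp (-(φ l:ℂ)*Complex.I))^(j l:ℕ)) *
        tensorN (fun l => spinA (θ l) (φ l)) j i
    = Complex.exp ((∑ l, (-1:ℂ)^(m l:ℕ) * (θ l:ℂ)) * Complex.I) *
      ∏ l, ((-1:ℂ)^(((m l + 1 : Fin 2)):ℕ) * Complex.I * Complex.exp (-(φ l:ℂ)*Complex.I))^(i l:ℕ) := by
  have step1 : ∀ j : Fin N → Fin 2,
      (∏ l, ((-1:ℂ)^(m l:ℕ) * Complex.I * Complex.exp (-(φ l:ℂ)*Complex.I))^(j l:ℕ)) *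
        tensorN (fun l => spinA (θ l) (φ l)) j i
      = ∏ l, (((-1:ℂ)^(m l:ℕ) * Complex.I * Complex.exp (-(φ l:ℂ)*Complex.I))^(j l:ℕ) *
          spinA (θ l) (φ l) (j l) (i l)) := by
    intro j; rw [tensorN, ← Finset.prod_mul_distrib]
  simp only [step1]
  have hswap := Finset.sum_prod_piFinset (univ : Finset (Fin 2))
    (fun l a => ((-1:ℂ)^(m l:ℕ) * Complex.I * Complex.exp (-(φ l:ℂ)*Complex.I))^(a:ℕ) *
      spinA (θ l) (φ l) a (i l))
  rw [Fintype.piFinset_univ] at hswap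
  rw [hswap]
  have step2 : ∀ l, (∑ a : Fin 2,
      ((-1:ℂ)^(m l:ℕ) * Complex.I * Complex.exp (-(φ l:ℂ)*Complex.I))^(a:ℕ) *
        spinA (θ l) (φ l) a (i l))
      = Complex.exp ((-1:ℂ)^(m l:ℕ) * (θ l:ℂ) * Complex.I) *
        ((-1:ℂ)^(((m l + 1:Fin 2)):ℕ) * Complex.I * Complex.exp (-(φ l:ℂ)*Complex.I))^(i l:ℕ) := by
    intro l; rw [site, hflip]
  rw [Finset.prod_congr rfl (fun l _ => step2 l), Finset.prod_mul_distrib,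
    ← Complex.exp_sum, Finset.sum_mul]

theorem stmt6 (N : ℕ) (hN : 1 ≤ N) (θ φ : Fin N → ℝ) (c : (Fin N → Fin 2) → ℂ)
    (ψ : (Fin N → Fin 2) → ℂ)
    (hψ : ψ = ∑ i ∈ Finset.univ.filter (fun i : Fin N → Fin 2 => Even (∑ l, (i l : ℕ))),
        c i • (Pi.single i 1 : (Fin N → Fin 2) → ℂ))
    (hA : (tensorN (fun l => spinA (θ l) (φ l))).mulVec ψ = ψ) :
    ∀ m : Fin N → Fin 2,
      (Real.sin (∑ l, (-1 : ℝ) ^ (m l : ℕ) * θ l) : ℂ) *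
        ∑ i ∈ Finset.univ.filter (fun i : Fin N → Fin 2 => Even (∑ l, (i l : ℕ))),
          (-1 : ℂ) ^ (∑ l, (m l : ℕ) * (i l : ℕ)) *
            ((∏ l, (Complex.I * Complex.exp (-(φ l : ℂ) * Complex.I)) ^ (i l : ℕ)) * c i)
        = 0 := by
  intro m
  classical
  set S : Finset (Fin N → Fin 2) :=
    Finset.univ.filter (fun i : Fin N → Fin 2 => Even (∑ l, (i l : ℕ))) with hSdef
  set w : (Fin N → Fin 2) → (Fin N → Fin 2) → ℂ := fun m' j =>
    ∏ l, ((-1:ℂ)^(m' l : ℕ) * Complex.I * Complex.exp (-(φ l : ℂ)*Complex.I))^(j l : ℕ) with hw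
  set F : (Fin N → Fin 2) → ℂ := fun m' => ∑ i ∈ S, w m' i * c i with hF
  -- pairing with ψ
  have hpair : ∀ m', ∑ j, w m' j * ψ j = F m' := by
    intro m'; rw [hψ]; exact aux_pair S (w m') c
  -- the key recursion
  have hkey : ∀ m' : Fin N → Fin 2,
      F m' = Complex.exp ((∑ l, (-1:ℂ)^(m' l : ℕ) * (θ l : ℂ)) * Complex.I) *
        F (fun l => m' l + 1) := by
    intro m'
    calc F m' = ∑ j, w m' j * ψ j := (hpair m').symm
      _ = ∑ j, w m' j * (tensorN (fun l => spinA (θ l) (φ l))).mulVec ψ j := by rw [hA]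
      _ = ∑ j, w m' j * ∑ i, tensorN (fun l => spinA (θ l) (φ l)) j i * ψ i := by
          simp only [Matrix.mulVec, dotProduct]
      _ = ∑ i, (∑ j, w m' j * tensorN (fun l => spinA (θ l) (φ l)) j i) * ψ i := by
          simp only [Finset.mul_sum]
          rw [Finset.sum_comm]
          refine Finset.sum_congr rfl fun i _ => ?_
          rw [Finset.sum_mul]
          exact Finset.sum_congr rfl fun j _ => by ring
      _ = ∑ i, (Complex.exp ((∑ l, (-1:ℂ)^(m' l : ℕ) * (θ l : ℂ)) * Complex.I) *
            w (fun l => m' l + 1) i) * ψ i := by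
          exact Finset.sum_congr rfl fun i _ => by rw [aux_inner θ φ m' i]
      _ = Complex.exp ((∑ l, (-1:ℂ)^(m' l : ℕ) * (θ l : ℂ)) * Complex.I) *
            ∑ j, w (fun l => m' l + 1) j * ψ j := by
          rw [Finset.mul_sum]; exact Finset.sum_congr rfl fun i _ => by ring
      _ = _ := by rw [hpair]
  -- flipping all bits fixes F on the even subspace
  have hFflip : ∀ m' : Fin N → Fin 2, F (fun l => m' l + 1) = F m' := by
    intro m'
    refine Finset.sum_congr rfl fun i hi => ?_
    have hi' : Even (∑ l, (i l : ℕ)) := by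
      simpa [hSdef, Finset.mem_filter] using hi
    have hwi : w (fun l => m' l + 1) i = (-1:ℂ)^(∑ l, (i l : ℕ)) * w m' i := by
      simp only [hw]
      rw [← Finset.prod_pow_eq_pow_sum, ← Finset.prod_mul_distrib]
      refine Finset.prod_congr rfl fun l _ => ?_
      rw [hneg, show (-(-1:ℂ)^(m' l : ℕ)) * Complex.I * Complex.exp (-(φ l : ℂ)*Complex.I)
        = (-1) * ((-1:ℂ)^(m' l : ℕ) * Complex.I * Complex.exp (-(φ l : ℂ)*Complex.I)) by ring,
        mul_pow]
    rw [hwi, hi'.neg_one_pow, one_mul]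
  -- the goal sum equals F m
  have hgoal : (∑ i ∈ S, (-1:ℂ)^(∑ l, (m l : ℕ)*(i l : ℕ)) *
      ((∏ l, (Complex.I * Complex.exp (-(φ l : ℂ)*Complex.I))^(i l : ℕ)) * c i)) = F m := by
    refine Finset.sum_congr rfl fun i _ => ?_
    rw [← mul_assoc]
    congr 1
    simp only [hw]
    rw [← Finset.prod_pow_eq_pow_sum, ← Finset.prod_mul_distrib]
    refine Finset.prod_congr rfl fun l _ => ?_
    simp [mul_pow, pow_mul, mul_assoc]
  rw [hgoal]
  -- assemble
  set Θ : ℝ := ∑ l, (-1:ℝ)^(m l : ℕ) * θ l with hΘdef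
  have hΘ : ((Θ : ℝ) : ℂ) = ∑ l, (-1:ℂ)^(m l : ℕ) * (θ l : ℂ) := by
    rw [hΘdef]; push_cast; ring
  have h3 : Complex.exp ((Θ:ℂ) * Complex.I) * F m = F m := by
    rw [hΘ]
    exact ((hkey m).trans (by rw [hFflip m])).symm
  have h4 : Complex.exp (-(Θ:ℂ) * Complex.I) * F m = F m := by
    nth_rewrite 1 [← h3]
    rw [← mul_assoc, ← Complex.exp_add,
      show -(Θ:ℂ) * Complex.I + (Θ:ℂ) * Complex.I = 0 by ring, Complex.exp_zero, one_mul]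
  rw [Complex.ofReal_sin, Complex.sin]
  linear_combination (Complex.I/2) * h4 - (Complex.I/2) * h3
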